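/- Define Q-linear operators U_x, D*_y on the vector space of formal power series in x, y with coefficients in the free Q-vector space on partitions by: U_x λ = sum over partitions ν such that ν/λ is a horizontal strip of x^{|ν/λ|}·ν, and D*_y λ = sum over partitions μ ⊆ λ such that λ/μ is a vertical strip of y^{|λ/μ|}·μ. Then D*_y ∘ U_x = (1+xy)·(U_x ∘ D*_y). -/

import Mathlib

open Finset

/-- The skew shape `ν/μ` is a horizontal strip (at most one cell in each column). -/
def IsHorizontalStrip (μ ν : YoungDiagram) : Prop :=
  μ ≤ ν ∧ ∀ c₁ ∈ ν.cells \ μ.cells, ∀ c₂ ∈ ν.cells \ μ.cells, c₁.2 = c₂.2 → c₁ = c₂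

/-- The skew shape `ν/μ` is a vertical strip (at most one cell in each row). -/
def IsVerticalStrip (μ ν : YoungDiagram) : Prop :=
  μ ≤ ν ∧ ∀ c₁ ∈ ν.cells \ μ.cells, ∀ c₂ ∈ ν.cells \ μ.cells, c₁.1 = c₂.1 → c₁ = c₂

namespace DCR

lemma le_iff_colLen {μ ν : YoungDiagram} : μ ≤ ν ↔ ∀ j, μ.colLen j ≤ ν.colLen j := by
  constructor
  · intro h j
    rcases Nat.eq_zero_or_pos (μ.colLen j) with h0 | h0
    · omega
    · have : (μ.colLen j - 1, j) ∈ μ := by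
        rw [YoungDiagram.mem_iff_lt_colLen]; omega
      have := h this
      rw [YoungDiagram.mem_iff_lt_colLen] at this
      omega
  · intro h p hp
    obtain ⟨i, j⟩ := p
    rw [YoungDiagram.mem_iff_lt_colLen] at hp ⊢
    exact lt_of_lt_of_le hp (h j)

lemma eq_of_colLen {μ ν : YoungDiagram} (h : ∀ j, μ.colLen j = ν.colLen j) : μ = ν :=
  le_antisymm (le_iff_colLen.2 fun j => (h j).le) (le_iff_colLen.2 fun j => (h j).ge)

lemma mem_diff_iff {μ ν : YoungDiagram} {i j : ℕ} :
    (i, j) ∈ ν.cells \ μ.cells ↔ (μ.colLen j ≤ i ∧ i < ν.colLen j) := by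
  simp only [Finset.mem_sdiff, YoungDiagram.mem_cells, YoungDiagram.mem_iff_lt_colLen]
  omega

lemma hstrip_iff {μ ν : YoungDiagram} :
    IsHorizontalStrip μ ν ↔ ∀ j, μ.colLen j ≤ ν.colLen j ∧ ν.colLen j ≤ μ.colLen j + 1 := by
  constructor
  · rintro ⟨hle, h⟩ j
    refine ⟨le_iff_colLen.1 hle j, ?_⟩
    by_contra hc
    push_neg at hc
    have h1 : (μ.colLen j, j) ∈ ν.cells \ μ.cells := mem_diff_iff.2 (by omega)
    have h2 : (μ.colLen j + 1, j) ∈ ν.cells \ μ.cells := mem_diff_iff.2 (by omega)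
    have := h _ h1 _ h2 rfl
    simp at this
  · intro h
    refine ⟨le_iff_colLen.2 fun j => (h j).1, ?_⟩
    rintro ⟨i₁, j₁⟩ h1 ⟨i₂, j₂⟩ h2 (rfl : j₁ = j₂)
    rw [mem_diff_iff] at h1 h2
    have := h j₁
    have : i₁ = i₂ := by omega
    simp [this]

lemma vstrip_iff {μ ν : YoungDiagram} :
    IsVerticalStrip μ ν ↔
      (∀ j, μ.colLen j ≤ ν.colLen j) ∧ ∀ j, ν.colLen (j + 1) ≤ μ.colLen j := by
  constructor
  · rintro ⟨hle, h⟩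
    refine ⟨le_iff_colLen.1 hle, ?_⟩
    intro j
    by_contra hc
    push_neg at hc
    have hmono : μ.colLen (j+1) ≤ μ.colLen j := μ.colLen_anti j (j+1) (by omega)
    have hnu : ν.colLen (j+1) ≤ ν.colLen j := ν.colLen_anti j (j+1) (by omega)
    have h1 : (μ.colLen j, j) ∈ ν.cells \ μ.cells := mem_diff_iff.2 (by omega)
    have h2 : (μ.colLen j, j + 1) ∈ ν.cells \ μ.cells := mem_diff_iff.2 (by omega)
    have := h _ h1 _ h2 rfl
    simp at this
  · rintro ⟨hle, h⟩
    refine ⟨le_iff_colLen.2 hle, ?_⟩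
    rintro ⟨i₁, j₁⟩ h1 ⟨i₂, j₂⟩ h2 (rfl : i₁ = i₂)
    rw [mem_diff_iff] at h1 h2
    rcases lt_trichotomy j₁ j₂ with hlt | heq | hgt
    · exfalso
      have e1 : ν.colLen j₂ ≤ ν.colLen (j₁ + 1) := ν.colLen_anti _ _ (by omega)
      have := h j₁
      omega
    · simp [heq]
    · exfalso
      have e1 : ν.colLen j₁ ≤ ν.colLen (j₂ + 1) := ν.colLen_anti _ _ (by omega)
      have := h j₂
      omega

lemma colLen_zero_of {μ : YoungDiagram} {j : ℕ} (h : μ.rowLen 0 ≤ j) : μ.colLen j = 0 := by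
  by_contra hc
  have : (0, j) ∈ μ := YoungDiagram.mem_iff_lt_colLen.2 (by omega)
  rw [YoungDiagram.mem_iff_lt_rowLen] at this
  omega

lemma card_eq_sum_colLen (μ : YoungDiagram) {N : ℕ} (hN : ∀ j, N ≤ j → μ.colLen j = 0) :
    μ.cells.card = ∑ j ∈ Finset.range N, μ.colLen j := by
  have hmem : ∀ p ∈ μ.cells, Prod.snd p ∈ Finset.range N := by
    intro p hp
    obtain ⟨i, j⟩ := p
    rw [YoungDiagram.mem_cells, YoungDiagram.mem_iff_lt_colLen] at hp
    simp only [Finset.mem_range]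
    by_contra hc
    have := hN j (by omega)
    omega
  rw [Finset.card_eq_sum_card_fiberwise hmem]
  refine Finset.sum_congr rfl fun j _ => ?_
  rw [μ.colLen_eq_card]
  congr 1

/-- Young diagram from a (step-)antitone, eventually-zero column-length function. -/
def ofColLens (c : ℕ → ℕ) (hc : ∀ j, c (j + 1) ≤ c j) (N : ℕ) (hN : ∀ j, N ≤ j → c j = 0) :
    YoungDiagram where
  cells := (Finset.range (c 0) ×ˢ Finset.range N).filter fun p => p.1 < c p.2
  isLowerSet := by
    have hanti : Antitone c := antitone_nat_of_succ_le hc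
    rintro ⟨i₂, j₂⟩ ⟨i₁, j₁⟩ ⟨(hi : i₁ ≤ i₂), (hj : j₁ ≤ j₂)⟩ hmem
    simp only [Finset.coe_filter, Set.mem_setOf_eq, Finset.mem_product, Finset.mem_range] at hmem ⊢
    have h1 : i₁ < c j₁ := lt_of_le_of_lt hi (lt_of_lt_of_le hmem.2 (hanti hj))
    refine ⟨⟨lt_of_lt_of_le h1 (hanti (Nat.zero_le _)), ?_⟩, h1⟩
    by_contra hcj
    have := hN j₁ (by omega)
    omega

lemma mem_ofColLens {c : ℕ → ℕ} {hc : ∀ j, c (j + 1) ≤ c j} {N : ℕ}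
    {hN : ∀ j, N ≤ j → c j = 0} {i j : ℕ} :
    (i, j) ∈ ofColLens c hc N hN ↔ i < c j := by
  have hanti : Antitone c := antitone_nat_of_succ_le hc
  show (i, j) ∈ Finset.filter _ _ ↔ _
  simp only [Finset.mem_filter, Finset.mem_product, Finset.mem_range]
  constructor
  · tauto
  · intro h
    refine ⟨⟨lt_of_lt_of_le h (hanti (Nat.zero_le _)), ?_⟩, h⟩
    by_contra hcj
    have := hN j (by omega)
    omega

lemma colLen_ofColLens {c : ℕ → ℕ} {hc : ∀ j, c (j + 1) ≤ c j} {N : ℕ}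
    {hN : ∀ j, N ≤ j → c j = 0} (j : ℕ) :
    (ofColLens c hc N hN).colLen j = c j := by
  have h2 : ∀ i, i < (ofColLens c hc N hN).colLen j ↔ i < c j := by
    intro i
    rw [← YoungDiagram.mem_iff_lt_colLen]
    exact mem_ofColLens
  have ha := h2 (c j)
  have hb := h2 ((ofColLens c hc N hN).colLen j)
  omega

section Main

variable (l k : YoungDiagram)

/-- Bound beyond which everything vanishes. -/
def NN : ℕ := l.rowLen 0 + k.rowLen 0 + 1

lemma L_zero {j : ℕ} (h : NN l k ≤ j + 1) : l.colLen j = 0 :=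
  colLen_zero_of (by unfold NN at h; omega)

lemma K_zero {j : ℕ} (h : NN l k ≤ j + 1) : k.colLen j = 0 :=
  colLen_zero_of (by unfold NN at h; omega)

lemma NN_pos : 1 ≤ NN l k := by unfold NN; omega

/-- Feasibility: the interlacing conditions that make the sets nonempty. -/
def Feas : Prop := ∀ j, k.colLen j ≤ l.colLen j + 1 ∧ l.colLen (j + 1) ≤ k.colLen j

/-- Columns where the choice is forced to be 1. -/
def fset : Finset ℕ := (Finset.range (NN l k)).filter fun j => k.colLen j = l.colLen j + 1

/-- Free columns for the `ν`-side. -/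
def FA : Finset ℕ := (Finset.range (NN l k)).filter fun j =>
  k.colLen j ≤ l.colLen j ∧ (j = 0 ∨ l.colLen j + 1 ≤ k.colLen (j - 1))

/-- Free columns for the `μ`-side. -/
def FB : Finset ℕ := (Finset.range (NN l k)).filter fun j =>
  k.colLen j ≤ l.colLen j ∧ l.colLen (j + 1) + 1 ≤ k.colLen j

lemma card_FA (hF : Feas l k) : (FA l k).card = (FB l k).card + 1 := by
  classical
  set N := NN l k with hNdef
  have hN1 : 1 ≤ N := NN_pos l k
  set u : ℕ → ℕ := fun j => if j = 0 ∨ l.colLen j + 1 ≤ k.colLen (j - 1) then 1 else 0 with hu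
  have key : ∀ j, (if k.colLen j ≤ l.colLen j ∧ (j = 0 ∨ l.colLen j + 1 ≤ k.colLen (j - 1))
        then 1 else 0) + u (j + 1)
      = (if k.colLen j ≤ l.colLen j ∧ l.colLen (j + 1) + 1 ≤ k.colLen j then 1 else 0) + u j := by
    intro j
    have hu1 : u (j + 1) = if l.colLen (j + 1) + 1 ≤ k.colLen j then 1 else 0 := by
      simp only [hu]
      congr 1
      simp only [Nat.add_sub_cancel, eq_iff_iff]
      constructor
      · rintro (h | h); · omega
        · exact h
      · intro h; right; exact h
    by_cases hs : k.colLen j ≤ l.colLen j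
    · rw [hu1]
      simp only [hs, true_and, hu]
      by_cases h1 : j = 0 ∨ l.colLen j + 1 ≤ k.colLen (j - 1) <;>
        by_cases h2 : l.colLen (j + 1) + 1 ≤ k.colLen j <;> simp [h1, h2] <;> exact Nat.add_comm _ _
    · have hforced : k.colLen j = l.colLen j + 1 := by
        have := (hF j).1; omega
      have hA : ¬(k.colLen j ≤ l.colLen j ∧ (j = 0 ∨ l.colLen j + 1 ≤ k.colLen (j - 1))) := by
        tauto
      have hB : ¬(k.colLen j ≤ l.colLen j ∧ l.colLen (j + 1) + 1 ≤ k.colLen j) := by tauto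
      rw [if_neg hA, if_neg hB, hu1]
      have huj : u j = 1 := by
        simp only [hu]
        rcases Nat.eq_zero_or_pos j with h0 | h0
        · simp [h0]
        · have hmono : k.colLen j ≤ k.colLen (j - 1) := k.colLen_anti _ _ (by omega)
          have : l.colLen j + 1 ≤ k.colLen (j - 1) := by omega
          simp [this]
      have huj1 : (if l.colLen (j + 1) + 1 ≤ k.colLen j then 1 else 0) = 1 := by
        have hmono : l.colLen (j + 1) ≤ l.colLen j := l.colLen_anti _ _ (by omega)
        have : l.colLen (j + 1) + 1 ≤ k.colLen j := by omega
        simp [this]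
      omega
  have hsum : ∑ j ∈ Finset.range N, ((if k.colLen j ≤ l.colLen j ∧
          (j = 0 ∨ l.colLen j + 1 ≤ k.colLen (j - 1)) then 1 else 0) + u (j + 1))
      = ∑ j ∈ Finset.range N, ((if k.colLen j ≤ l.colLen j ∧
          l.colLen (j + 1) + 1 ≤ k.colLen j then 1 else 0) + u j) :=
    Finset.sum_congr rfl fun j _ => key j
  rw [Finset.sum_add_distrib, Finset.sum_add_distrib] at hsum
  have hcA : (FA l k).card = ∑ j ∈ Finset.range N, (if k.colLen j ≤ l.colLen j ∧
      (j = 0 ∨ l.colLen j + 1 ≤ k.colLen (j - 1)) then 1 else 0) := by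
    rw [FA, Finset.card_filter]
  have hcB : (FB l k).card = ∑ j ∈ Finset.range N, (if k.colLen j ≤ l.colLen j ∧
      l.colLen (j + 1) + 1 ≤ k.colLen j then 1 else 0) := by
    rw [FB, Finset.card_filter]
  obtain ⟨M, hM⟩ : ∃ M, N = M + 1 := ⟨N - 1, by omega⟩
  have hshift : ∑ j ∈ Finset.range N, u j = u 0 + ∑ j ∈ Finset.range M, u (j + 1) := by
    rw [hM, Finset.sum_range_succ']
    omega
  have hshift2 : ∑ j ∈ Finset.range N, u (j + 1)
      = ∑ j ∈ Finset.range M, u (j + 1) + u N := by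
    rw [hM, Finset.sum_range_succ]
  have hu0 : u 0 = 1 := by simp [hu]
  have huN : u N = 0 := by
    have h1 : l.colLen N = 0 := L_zero l k (by omega)
    have h2 : k.colLen (N - 1) = 0 := K_zero l k (by omega)
    simp only [hu]
    rw [if_neg]
    push_neg
    exact ⟨by omega, by omega⟩
  omega


lemma sum_ite_card (S : Finset ℕ) (hS : ∀ j ∈ S, j < NN l k ∧ k.colLen j ≤ l.colLen j) :
    ∑ j ∈ Finset.range (NN l k),
        (if j ∈ S ∨ k.colLen j = l.colLen j + 1 then 1 else 0)
      = S.card + (fset l k).card := by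
  classical
  rw [← Finset.card_filter]
  have h4 : (Finset.range (NN l k)).filter
      (fun j => j ∈ S ∨ k.colLen j = l.colLen j + 1) = S ∪ fset l k := by
    ext j
    simp only [fset, Finset.mem_filter, Finset.mem_union, Finset.mem_range]
    constructor
    · rintro ⟨hj, h | h⟩
      · exact Or.inl h
      · exact Or.inr ⟨hj, h⟩
    · rintro (h | ⟨hj, h⟩)
      · exact ⟨(hS j h).1, Or.inl h⟩
      · exact ⟨hj, Or.inr h⟩
  have h5 : Disjoint S (fset l k) := by
    rw [Finset.disjoint_left]
    intro j h1 h2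
    have ha := (hS j h1).2
    have hb := (Finset.mem_filter.1 h2).2
    omega
  rw [h4, Finset.card_union_of_disjoint h5]

lemma countA (hF : Feas l k) (a : ℕ) :
    Nat.card {ν : YoungDiagram | IsHorizontalStrip l ν ∧ IsVerticalStrip k ν ∧
        ν.cells.card = l.cells.card + a}
      = (((FA l k).powerset).filter fun S => S.card + (fset l k).card = a).card := by
  classical
  set N := NN l k with hNdef
  have hN1 : 1 ≤ N := NN_pos l k
  set X : Set YoungDiagram := {ν : YoungDiagram | IsHorizontalStrip l ν ∧ IsVerticalStrip k ν ∧
    ν.cells.card = l.cells.card + a} with hX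
  set Q : Finset (Finset ℕ) :=
    ((FA l k).powerset).filter (fun S => S.card + (fset l k).card = a) with hQ
  set toS : YoungDiagram → Finset ℕ := fun ν =>
    (Finset.range N).filter (fun j => ν.colLen j = l.colLen j + 1 ∧ k.colLen j ≤ l.colLen j)
    with htoS
  have hlsum : l.cells.card = ∑ j ∈ Finset.range N, l.colLen j :=
    card_eq_sum_colLen l fun j hj => L_zero l k (by omega)
  have htoSmem : ∀ ν j, j ∈ toS ν ↔
      (j < N ∧ ν.colLen j = l.colLen j + 1 ∧ k.colLen j ≤ l.colLen j) := by
    intro ν j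
    simp [htoS, Finset.mem_filter, Finset.mem_range, and_assoc]
  have hczero : ∀ ν ∈ X, ∀ j, N ≤ j → ν.colLen j = 0 := by
    intro ν hν j hj
    obtain ⟨j', rfl⟩ : ∃ j', j = j' + 1 := ⟨j - 1, by omega⟩
    have hV := (vstrip_iff.1 hν.2.1).2 j'
    have := K_zero l k (j := j') (by omega)
    omega
  have hrecover : ∀ ν ∈ X, ∀ j, ν.colLen j
      = l.colLen j + (if j ∈ toS ν ∨ k.colLen j = l.colLen j + 1 then 1 else 0) := by
    intro ν hν j
    have hH := (hstrip_iff.1 hν.1) j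
    have hV := (vstrip_iff.1 hν.2.1).1 j
    by_cases hjN : j < N
    · split_ifs with h
      · rcases h with h | h
        · exact ((htoSmem ν j).1 h).2.1
        · omega
      · rw [htoSmem] at h
        push_neg at h
        rcases Nat.lt_or_ge (ν.colLen j) (l.colLen j + 1) with h' | h'
        · omega
        · have := h.1 hjN (by omega)
          omega
    · have h0 : ν.colLen j = 0 := hczero ν hν j (by omega)
      have hL0 : l.colLen j = 0 := L_zero l k (by omega)
      have hK0 : k.colLen j = 0 := K_zero l k (by omega)
      have hnot : j ∉ toS ν := fun hc => by have := (htoSmem ν j).1 hc; omega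
      rw [if_neg (by push_neg; exact ⟨hnot, by omega⟩)]
      omega
  have htoSsub : ∀ ν, ∀ j ∈ toS ν, j < N ∧ k.colLen j ≤ l.colLen j := by
    intro ν j hj
    have := (htoSmem ν j).1 hj
    exact ⟨this.1, this.2.2⟩
  have hcardX : ∀ ν ∈ X, ν.cells.card = l.cells.card + ((toS ν).card + (fset l k).card) := by
    intro ν hν
    have h1 : ν.cells.card = ∑ j ∈ Finset.range N, ν.colLen j :=
      card_eq_sum_colLen ν (hczero ν hν)
    have h2 : ∑ j ∈ Finset.range N, ν.colLen j
        = ∑ j ∈ Finset.range N, (l.colLen j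
          + (if j ∈ toS ν ∨ k.colLen j = l.colLen j + 1 then 1 else 0)) :=
      Finset.sum_congr rfl fun j _ => hrecover ν hν j
    rw [h1, h2, Finset.sum_add_distrib, sum_ite_card l k (toS ν) (htoSsub ν), ← hlsum]
  have htoQ : ∀ ν ∈ X, toS ν ∈ Q := by
    intro ν hν
    have hcard := hcardX ν hν
    have hνa : ν.cells.card = l.cells.card + a := hν.2.2
    refine Finset.mem_filter.2 ⟨Finset.mem_powerset.2 ?_, by omega⟩
    intro j hj
    obtain ⟨hjN, hc, hk⟩ := (htoSmem ν j).1 hj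
    refine Finset.mem_filter.2 ⟨Finset.mem_range.2 hjN, hk, ?_⟩
    rcases Nat.eq_zero_or_pos j with h0 | h0
    · exact Or.inl h0
    · right
      obtain ⟨j', rfl⟩ : ∃ j', j = j' + 1 := ⟨j - 1, by omega⟩
      have hV := (vstrip_iff.1 hν.2.1).2 j'
      simp only [Nat.add_sub_cancel]
      omega
  rw [← Nat.card_eq_finsetCard]
  refine Nat.card_eq_of_bijective (fun x => ⟨toS x.1, htoQ x.1 x.2⟩) ⟨?_, ?_⟩
  · rintro ⟨ν, hν⟩ ⟨ν', hν'⟩ h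
    simp only [Subtype.mk.injEq] at h ⊢
    refine eq_of_colLen fun j => ?_
    rw [hrecover ν hν j, hrecover ν' hν' j, h]
  · rintro ⟨S, hS⟩
    have hSQ := Finset.mem_filter.1 hS
    have hSFA : S ⊆ FA l k := Finset.mem_powerset.1 hSQ.1
    have hScard : S.card + (fset l k).card = a := hSQ.2
    have hSfa : ∀ j ∈ S, j < N ∧ k.colLen j ≤ l.colLen j ∧
        (j = 0 ∨ l.colLen j + 1 ≤ k.colLen (j - 1)) := by
      intro j hj
      have := Finset.mem_filter.1 (hSFA hj)
      rw [Finset.mem_range] at this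
      exact ⟨this.1, this.2⟩
    set c : ℕ → ℕ := fun j =>
      l.colLen j + (if j ∈ S ∨ k.colLen j = l.colLen j + 1 then 1 else 0) with hcdef
    have hKc : ∀ j, k.colLen j ≤ c j := by
      intro j
      have := (hF j).1
      simp only [hcdef]
      split_ifs with h
      · omega
      · push_neg at h
        omega
    have hcK : ∀ j, c (j + 1) ≤ k.colLen j := by
      intro j
      simp only [hcdef]
      split_ifs with h
      · rcases h with h | h
        · have := (hSfa _ h).2.2
          simp only [Nat.add_sub_cancel] at this
          omega
        · have := k.colLen_anti j (j + 1) (by omega)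
          omega
      · have := (hF j).2
        omega
    have hstep : ∀ j, c (j + 1) ≤ c j := fun j => le_trans (hcK j) (hKc j)
    have hzero : ∀ j, N ≤ j → c j = 0 := by
      intro j hj
      have hL0 : l.colLen j = 0 := L_zero l k (by omega)
      have hK0 : k.colLen j = 0 := K_zero l k (by omega)
      have hjS : j ∉ S := fun hjS => by have := (hSfa j hjS).1; omega
      simp only [hcdef]
      rw [if_neg (by push_neg; exact ⟨hjS, by omega⟩)]
      omega
    set ν := ofColLens c hstep N hzero with hνdef
    have hνc : ∀ j, ν.colLen j = c j := fun j => colLen_ofColLens j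
    have hcup : ∀ j, l.colLen j ≤ c j ∧ c j ≤ l.colLen j + 1 := by
      intro j
      simp only [hcdef]
      split_ifs <;> omega
    have hνX : ν ∈ X := by
      refine ⟨hstrip_iff.2 fun j => by rw [hνc]; exact hcup j,
        vstrip_iff.2 ⟨fun j => by rw [hνc]; exact hKc j,
          fun j => by rw [hνc]; exact hcK j⟩, ?_⟩
      have h1 : ν.cells.card = ∑ j ∈ Finset.range N, ν.colLen j :=
        card_eq_sum_colLen ν (fun j hj => by rw [hνc]; exact hzero j hj)
      have h2 : ∑ j ∈ Finset.range N, ν.colLen j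
          = ∑ j ∈ Finset.range N, (l.colLen j
            + (if j ∈ S ∨ k.colLen j = l.colLen j + 1 then 1 else 0)) :=
        Finset.sum_congr rfl fun j _ => by rw [hνc]
      rw [h1, h2, Finset.sum_add_distrib,
        sum_ite_card l k S (fun j hj => ⟨(hSfa j hj).1, (hSfa j hj).2.1⟩), ← hlsum]
      omega
    refine ⟨⟨ν, hνX⟩, ?_⟩
    simp only [Subtype.mk.injEq]
    ext j
    rw [htoSmem]
    constructor
    · rintro ⟨hjN, hc1, hk1⟩
      rw [hνc] at hc1
      simp only [hcdef] at hc1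
      split_ifs at hc1 with h
      · rcases h with h | h
        · exact h
        · omega
      · omega
    · intro hjS
      obtain ⟨hjN, hk1, -⟩ := hSfa j hjS
      refine ⟨hjN, ?_, hk1⟩
      rw [hνc]
      simp only [hcdef]
      rw [if_pos (Or.inl hjS)]


lemma countB (hF : Feas l k) (r : ℕ) :
    Nat.card {μ : YoungDiagram | IsVerticalStrip μ l ∧ IsHorizontalStrip μ k ∧
        μ.cells.card + r = k.cells.card}
      = (((FB l k).powerset).filter fun S => S.card + (fset l k).card = r).card := by
  classical
  set N := NN l k with hNdef
  have hN1 : 1 ≤ N := NN_pos l k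
  set Y : Set YoungDiagram := {μ : YoungDiagram | IsVerticalStrip μ l ∧ IsHorizontalStrip μ k ∧
    μ.cells.card + r = k.cells.card} with hY
  set Q : Finset (Finset ℕ) :=
    ((FB l k).powerset).filter (fun S => S.card + (fset l k).card = r) with hQ
  set toT : YoungDiagram → Finset ℕ := fun μ =>
    (Finset.range N).filter (fun j => k.colLen j = μ.colLen j + 1 ∧ k.colLen j ≤ l.colLen j)
    with htoT
  have hksum : k.cells.card = ∑ j ∈ Finset.range N, k.colLen j :=
    card_eq_sum_colLen k fun j hj => K_zero l k (by omega)
  have htoTmem : ∀ μ j, j ∈ toT μ ↔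
      (j < N ∧ k.colLen j = μ.colLen j + 1 ∧ k.colLen j ≤ l.colLen j) := by
    intro μ j
    simp [htoT, Finset.mem_filter, Finset.mem_range, and_assoc]
  have hmzero : ∀ μ ∈ Y, ∀ j, N ≤ j → μ.colLen j = 0 := by
    intro μ hμ j hj
    have hH := (hstrip_iff.1 hμ.2.1) j
    have := K_zero l k (j := j) (by omega)
    omega
  have hrecover : ∀ μ ∈ Y, ∀ j, k.colLen j
      = μ.colLen j + (if j ∈ toT μ ∨ k.colLen j = l.colLen j + 1 then 1 else 0) := by
    intro μ hμ j
    have hH := (hstrip_iff.1 hμ.2.1) j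
    have hVl := (vstrip_iff.1 hμ.1).1 j
    by_cases hjN : j < N
    · split_ifs with h
      · rcases h with h | h
        · exact ((htoTmem μ j).1 h).2.1
        · omega
      · push_neg at h
        have h1 := h.1
        rw [htoTmem] at h1
        push_neg at h1
        have := (hF j).1
        rcases Nat.lt_or_ge (k.colLen j) (μ.colLen j + 1) with h' | h'
        · omega
        · have := h1 hjN (by omega)
          omega
    · have hK0 : k.colLen j = 0 := K_zero l k (by omega)
      have h0 : μ.colLen j = 0 := hmzero μ hμ j (by omega)
      have hL0 : l.colLen j = 0 := L_zero l k (by omega)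
      have hnot : j ∉ toT μ := fun hc => by have := (htoTmem μ j).1 hc; omega
      rw [if_neg (by push_neg; exact ⟨hnot, by omega⟩)]
      omega
  have htoTsub : ∀ μ, ∀ j ∈ toT μ, j < N ∧ k.colLen j ≤ l.colLen j := by
    intro μ j hj
    have := (htoTmem μ j).1 hj
    exact ⟨this.1, this.2.2⟩
  have hcardY : ∀ μ ∈ Y, k.cells.card = μ.cells.card + ((toT μ).card + (fset l k).card) := by
    intro μ hμ
    have h1 : μ.cells.card = ∑ j ∈ Finset.range N, μ.colLen j :=
      card_eq_sum_colLen μ (hmzero μ hμ)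
    have h2 : ∑ j ∈ Finset.range N, k.colLen j
        = ∑ j ∈ Finset.range N, (μ.colLen j
          + (if j ∈ toT μ ∨ k.colLen j = l.colLen j + 1 then 1 else 0)) :=
      Finset.sum_congr rfl fun j _ => hrecover μ hμ j
    rw [hksum, h2, Finset.sum_add_distrib, sum_ite_card l k (toT μ) (htoTsub μ), ← h1]
  have htoQ : ∀ μ ∈ Y, toT μ ∈ Q := by
    intro μ hμ
    have hcard := hcardY μ hμ
    have hμr : μ.cells.card + r = k.cells.card := hμ.2.2
    refine Finset.mem_filter.2 ⟨Finset.mem_powerset.2 ?_, by omega⟩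
    intro j hj
    obtain ⟨hjN, hc, hk⟩ := (htoTmem μ j).1 hj
    refine Finset.mem_filter.2 ⟨Finset.mem_range.2 hjN, hk, ?_⟩
    have hVl := (vstrip_iff.1 hμ.1).2 j
    omega
  rw [← Nat.card_eq_finsetCard]
  refine Nat.card_eq_of_bijective (fun x => ⟨toT x.1, htoQ x.1 x.2⟩) ⟨?_, ?_⟩
  · rintro ⟨μ, hμ⟩ ⟨μ', hμ'⟩ h
    simp only [Subtype.mk.injEq] at h ⊢
    refine eq_of_colLen fun j => ?_
    have e1 := hrecover μ hμ j
    have e2 := hrecover μ' hμ' j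
    rw [h] at e1
    omega
  · rintro ⟨T, hT⟩
    have hTQ := Finset.mem_filter.1 hT
    have hTFB : T ⊆ FB l k := Finset.mem_powerset.1 hTQ.1
    have hTcard : T.card + (fset l k).card = r := hTQ.2
    have hTfb : ∀ j ∈ T, j < N ∧ k.colLen j ≤ l.colLen j ∧
        l.colLen (j + 1) + 1 ≤ k.colLen j := by
      intro j hj
      have := Finset.mem_filter.1 (hTFB hj)
      rw [Finset.mem_range] at this
      exact ⟨this.1, this.2⟩
    set m : ℕ → ℕ := fun j =>
      k.colLen j - (if j ∈ T ∨ k.colLen j = l.colLen j + 1 then 1 else 0) with hmdef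
    have hKm : ∀ j, k.colLen j
        = m j + (if j ∈ T ∨ k.colLen j = l.colLen j + 1 then 1 else 0) := by
      intro j
      simp only [hmdef]
      split_ifs with h
      · rcases h with h | h
        · have := (hTfb _ h).2.2
          omega
        · omega
      · omega
    have hml : ∀ j, m j ≤ l.colLen j := by
      intro j
      have := (hF j).1
      simp only [hmdef]
      split_ifs with h
      · omega
      · push_neg at h
        omega
    have hLm : ∀ j, l.colLen (j + 1) ≤ m j := by
      intro j
      simp only [hmdef]
      split_ifs with h
      · rcases h with h | h
        · have := (hTfb _ h).2.2
          omega
        · have := l.colLen_anti j (j + 1) (by omega)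
          omega
      · have := (hF j).2
        omega
    have hstep : ∀ j, m (j + 1) ≤ m j := fun j => le_trans (hml (j + 1)) (hLm j)
    have hzero : ∀ j, N ≤ j → m j = 0 := by
      intro j hj
      have hK0 : k.colLen j = 0 := K_zero l k (by omega)
      simp only [hmdef]
      omega
    set μ := ofColLens m hstep N hzero with hμdef
    have hμm : ∀ j, μ.colLen j = m j := fun j => colLen_ofColLens j
    have hμY : μ ∈ Y := by
      refine ⟨vstrip_iff.2 ⟨fun j => by rw [hμm]; exact hml j,
        fun j => by rw [hμm]; exact hLm j⟩,
        hstrip_iff.2 fun j => by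
          rw [hμm]
          have := hKm j
          split_ifs at this <;> omega, ?_⟩
      have h1 : μ.cells.card = ∑ j ∈ Finset.range N, μ.colLen j :=
        card_eq_sum_colLen μ (fun j hj => by rw [hμm]; exact hzero j hj)
      have h2 : ∑ j ∈ Finset.range N, k.colLen j
          = ∑ j ∈ Finset.range N, (μ.colLen j
            + (if j ∈ T ∨ k.colLen j = l.colLen j + 1 then 1 else 0)) :=
        Finset.sum_congr rfl fun j _ => by rw [hμm]; exact hKm j
      rw [hksum, h2, Finset.sum_add_distrib,
        sum_ite_card l k T (fun j hj => ⟨(hTfb j hj).1, (hTfb j hj).2.1⟩), ← h1]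
      omega
    refine ⟨⟨μ, hμY⟩, ?_⟩
    simp only [Subtype.mk.injEq]
    ext j
    rw [htoTmem]
    constructor
    · rintro ⟨hjN, hc1, hk1⟩
      rw [hμm] at hc1
      have := hKm j
      split_ifs at this with h
      · rcases h with h | h
        · exact h
        · omega
      · omega
    · intro hjT
      obtain ⟨hjN, hk1, hlk1⟩ := hTfb j hjT
      refine ⟨hjN, ?_, hk1⟩
      rw [hμm]
      have := hKm j
      rw [if_pos (Or.inl hjT)] at this
      omega


lemma feas_of_nu (ν : YoungDiagram) (h1 : IsHorizontalStrip l ν) (h2 : IsVerticalStrip k ν) :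
    Feas l k := by
  intro j
  have a1 := (hstrip_iff.1 h1) j
  have a2 := (hstrip_iff.1 h1) (j + 1)
  have b1 := (vstrip_iff.1 h2).1 j
  have b2 := (vstrip_iff.1 h2).2 j
  omega

lemma feas_of_mu (μ : YoungDiagram) (h1 : IsVerticalStrip μ l) (h2 : IsHorizontalStrip μ k) :
    Feas l k := by
  intro j
  have a1 := (hstrip_iff.1 h2) j
  have b1 := (vstrip_iff.1 h1).1 j
  have b2 := (vstrip_iff.1 h1).2 j
  omega

end Main

lemma powerset_filter_card (U : Finset ℕ) (f r : ℕ) :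
    ((U.powerset).filter fun S => S.card + f = r).card
      = if f ≤ r then U.card.choose (r - f) else 0 := by
  classical
  split_ifs with h
  · rw [← Finset.card_powersetCard, Finset.powersetCard_eq_filter]
    congr 1
    apply Finset.filter_congr
    intro S _
    omega
  · rw [Finset.card_eq_zero, Finset.filter_eq_empty_iff]
    intro S _
    omega

end DCR

/-- The commutation relation `D*_y ∘ U_x = (1+xy) · (U_x ∘ D*_y)` for the up and dual
down operators on Young's lattice, stated coefficientwise: for all partitions `λ`, `κ`
and all exponents `a`, `b`, the coefficient of `κ·x^a·y^b` on the two sides agree.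
The coefficient on the left counts partitions `ν` with `ν/λ` a horizontal strip of
size `a` and `ν/κ` a vertical strip of size `b`; on the right one counts `μ` with
`λ/μ` a vertical strip of size `b` and `κ/μ` a horizontal strip of size `a`, plus
(accounting for the factor `xy`) the analogous count with sizes `b-1` and `a-1`. -/
theorem dual_commutation_relation_schur (l k : YoungDiagram) (a b : ℕ) :
    {ν : YoungDiagram | IsHorizontalStrip l ν ∧ ν.cells.card = l.cells.card + a ∧
        IsVerticalStrip k ν ∧ ν.cells.card = k.cells.card + b}.ncard
      = {μ : YoungDiagram | IsVerticalStrip μ l ∧ l.cells.card = μ.cells.card + b ∧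
            IsHorizontalStrip μ k ∧ k.cells.card = μ.cells.card + a}.ncard
        + {μ : YoungDiagram | 1 ≤ a ∧ 1 ≤ b ∧
            IsVerticalStrip μ l ∧ l.cells.card = μ.cells.card + (b - 1) ∧
            IsHorizontalStrip μ k ∧ k.cells.card = μ.cells.card + (a - 1)}.ncard := by
  classical
  by_cases hrel : l.cells.card + a = k.cells.card + b
  · by_cases hF : DCR.Feas l k
    · -- main case
      have hL : {ν : YoungDiagram | IsHorizontalStrip l ν ∧ ν.cells.card = l.cells.card + a ∧
          IsVerticalStrip k ν ∧ ν.cells.card = k.cells.card + b}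
          = {ν : YoungDiagram | IsHorizontalStrip l ν ∧ IsVerticalStrip k ν ∧
            ν.cells.card = l.cells.card + a} := by
        ext ν
        simp only [Set.mem_setOf_eq]
        constructor
        · rintro ⟨h1, h2, h3, h4⟩
          exact ⟨h1, h3, h2⟩
        · rintro ⟨h1, h2, h3⟩
          exact ⟨h1, h3, h2, by omega⟩
      have hR1 : {μ : YoungDiagram | IsVerticalStrip μ l ∧ l.cells.card = μ.cells.card + b ∧
            IsHorizontalStrip μ k ∧ k.cells.card = μ.cells.card + a}
          = {μ : YoungDiagram | IsVerticalStrip μ l ∧ IsHorizontalStrip μ k ∧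
            μ.cells.card + a = k.cells.card} := by
        ext μ
        simp only [Set.mem_setOf_eq]
        constructor
        · rintro ⟨h1, h2, h3, h4⟩
          exact ⟨h1, h3, by omega⟩
        · rintro ⟨h1, h2, h3⟩
          exact ⟨h1, by omega, h2, by omega⟩
      rw [hL, hR1, ← Nat.card_coe_set_eq, ← Nat.card_coe_set_eq,
        DCR.countA l k hF a, DCR.countB l k hF a]
      by_cases ha : a = 0
      · have hR2 : {μ : YoungDiagram | 1 ≤ a ∧ 1 ≤ b ∧
            IsVerticalStrip μ l ∧ l.cells.card = μ.cells.card + (b - 1) ∧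
            IsHorizontalStrip μ k ∧ k.cells.card = μ.cells.card + (a - 1)} = ∅ := by
          ext μ
          simp only [Set.mem_setOf_eq, Set.mem_empty_iff_false, iff_false, not_and]
          intro h
          omega
        rw [hR2, Set.ncard_empty,
          DCR.powerset_filter_card, DCR.powerset_filter_card, DCR.card_FA l k hF]
        subst ha
        rcases Nat.eq_zero_or_pos (DCR.fset l k).card with hf | hf
        · simp [hf]
        · rw [if_neg (by omega), if_neg (by omega)]
      · have hR2 : {μ : YoungDiagram | 1 ≤ a ∧ 1 ≤ b ∧
            IsVerticalStrip μ l ∧ l.cells.card = μ.cells.card + (b - 1) ∧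
            IsHorizontalStrip μ k ∧ k.cells.card = μ.cells.card + (a - 1)}
            = {μ : YoungDiagram | IsVerticalStrip μ l ∧ IsHorizontalStrip μ k ∧
              μ.cells.card + (a - 1) = k.cells.card} := by
          ext μ
          simp only [Set.mem_setOf_eq]
          constructor
          · rintro ⟨h0, h1, h2, h3, h4, h5⟩
            exact ⟨h2, h4, by omega⟩
          · rintro ⟨h1, h2, h3⟩
            have hmono : μ.cells.card ≤ l.cells.card :=
              Finset.card_le_card (YoungDiagram.cells_subset_iff.2 h1.1)
            refine ⟨by omega, by omega, h1, by omega, h2, by omega⟩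
        rw [hR2, ← Nat.card_coe_set_eq, DCR.countB l k hF (a - 1),
          DCR.powerset_filter_card, DCR.powerset_filter_card, DCR.powerset_filter_card,
          DCR.card_FA l k hF]
        set f := (DCR.fset l k).card with hfdef
        set n := (DCR.FB l k).card with hndef
        by_cases hfa : f ≤ a - 1
        · rw [if_pos (by omega), if_pos (by omega), if_pos hfa]
          have he : a - f = (a - 1 - f) + 1 := by omega
          rw [he, Nat.choose_succ_succ]
          simp only [Nat.succ_eq_add_one]
          omega
        · by_cases hfa2 : f ≤ a
          · have hfa3 : f = a := by omega
            rw [if_pos (by omega), if_pos (by omega), if_neg hfa]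
            have : a - f = 0 := by omega
            rw [this]
            simp
          · rw [if_neg (by omega), if_neg (by omega), if_neg hfa]
    · -- infeasible: all sets empty
      have e1 : {ν : YoungDiagram | IsHorizontalStrip l ν ∧ ν.cells.card = l.cells.card + a ∧
          IsVerticalStrip k ν ∧ ν.cells.card = k.cells.card + b} = ∅ := by
        ext ν
        simp only [Set.mem_setOf_eq, Set.mem_empty_iff_false, iff_false]
        rintro ⟨h1, h2, h3, h4⟩
        exact hF (DCR.feas_of_nu l k ν h1 h3)
      have e2 : {μ : YoungDiagram | IsVerticalStrip μ l ∧ l.cells.card = μ.cells.card + b ∧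
            IsHorizontalStrip μ k ∧ k.cells.card = μ.cells.card + a} = ∅ := by
        ext μ
        simp only [Set.mem_setOf_eq, Set.mem_empty_iff_false, iff_false]
        rintro ⟨h1, h2, h3, h4⟩
        exact hF (DCR.feas_of_mu l k μ h1 h3)
      have e3 : {μ : YoungDiagram | 1 ≤ a ∧ 1 ≤ b ∧
            IsVerticalStrip μ l ∧ l.cells.card = μ.cells.card + (b - 1) ∧
            IsHorizontalStrip μ k ∧ k.cells.card = μ.cells.card + (a - 1)} = ∅ := by
        ext μ
        simp only [Set.mem_setOf_eq, Set.mem_empty_iff_false, iff_false]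
        rintro ⟨h0, h0', h1, h2, h3, h4⟩
        exact hF (DCR.feas_of_mu l k μ h1 h3)
      rw [e1, e2, e3]
      simp
  · -- cardinalities incompatible: all sets empty
    have e1 : {ν : YoungDiagram | IsHorizontalStrip l ν ∧ ν.cells.card = l.cells.card + a ∧
        IsVerticalStrip k ν ∧ ν.cells.card = k.cells.card + b} = ∅ := by
      ext ν
      simp only [Set.mem_setOf_eq, Set.mem_empty_iff_false, iff_false]
      rintro ⟨h1, h2, h3, h4⟩
      omega
    have e2 : {μ : YoungDiagram | IsVerticalStrip μ l ∧ l.cells.card = μ.cells.card + b ∧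
          IsHorizontalStrip μ k ∧ k.cells.card = μ.cells.card + a} = ∅ := by
      ext μ
      simp only [Set.mem_setOf_eq, Set.mem_empty_iff_false, iff_false]
      rintro ⟨h1, h2, h3, h4⟩
      omega
    have e3 : {μ : YoungDiagram | 1 ≤ a ∧ 1 ≤ b ∧
          IsVerticalStrip μ l ∧ l.cells.card = μ.cells.card + (b - 1) ∧
          IsHorizontalStrip μ k ∧ k.cells.card = μ.cells.card + (a - 1)} = ∅ := by
      ext μ
      simp only [Set.mem_setOf_eq, Set.mem_empty_iff_false, iff_false]
      rintro ⟨h0, h0', h1, h2, h3, h4⟩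
      omega
    rw [e1, e2, e3]
    simp
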